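/- Let G, ψ, f_HL be as in the Hopf-Lax setting: G symmetric non-negative definite with entries ≥ m/d² > 0 and ψ : ℝ_{≥0}^d → ℝ Lipschitz with constant L in the normalized ℓ^1 norm. Then for every t > 0, the map x ↦ f_HL(t,x) is Lipschitz with constant at most L in the normalized ℓ^1 norm, and for all t > s ≥ 0 and x ∈ ℝ_{≥0}^d, 0 ≤ f_HL(t,x) − f_HL(s,x) ≤ (L²/(2m))(t − s). -/

import Mathlib

/-- The normalized ℓ^1 norm on ℝ^d: ‖x‖_1 = (1/d)∑_k |x_k|. -/
noncomputable def norm1 (d : ℕ) (x : Fin d → ℝ) : ℝ := (1 / (d : ℝ)) * ∑ k, |x k|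

/-- The Hopf-Lax function f_HL(t,x) = sup_{y ≥ 0} { ψ(x+y) − ‖y‖_G²/(2t) } for t > 0,
with f_HL(0,x) = ψ(x). -/
noncomputable def fHL (d : ℕ) (G : Matrix (Fin d) (Fin d) ℝ) (ψ : (Fin d → ℝ) → ℝ)
    (t : ℝ) (x : Fin d → ℝ) : ℝ :=
  if 0 < t then
    sSup {r : ℝ | ∃ y : Fin d → ℝ, (∀ i, 0 ≤ y i) ∧
      r = ψ (x + y) - (∑ i, G.mulVec y i * y i) / (2 * t)}
  else ψ x

lemma aux_key (L m n t : ℝ) (hL : 0 ≤ L) (hm : 0 < m) (ht : 0 < t) (hn : 0 ≤ n) :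
    L * n - m * n ^ 2 / (2 * t) ≤ L ^ 2 * t / (2 * m) := by
  rw [sub_le_iff_le_add, div_add_div _ _ (by positivity) (by positivity),
    le_div_iff₀ (by positivity)]
  nlinarith [sq_nonneg (m * n - L * t)]

lemma norm1_nonneg (d : ℕ) (x : Fin d → ℝ) : 0 ≤ norm1 d x := by
  unfold norm1; positivity

lemma norm1_of_nonneg (d : ℕ) (x : Fin d → ℝ) (hx : ∀ i, 0 ≤ x i) :
    norm1 d x = (1 / (d : ℝ)) * ∑ k, x k := by
  unfold norm1
  congr 1
  exact Finset.sum_congr rfl fun i _ => abs_of_nonneg (hx i)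

lemma norm1_smul_nonneg (d : ℕ) (c : ℝ) (hc : 0 ≤ c) (x : Fin d → ℝ) :
    norm1 d (c • x) = c * norm1 d x := by
  unfold norm1
  simp only [Pi.smul_apply, smul_eq_mul, abs_mul, abs_of_nonneg hc, ← Finset.mul_sum]
  ring

/-- Regularity of the Hopf-Lax function: x ↦ f_HL(t,x) is L-Lipschitz in the normalized
ℓ^1 norm for each t > 0, and 0 ≤ f_HL(t,x) − f_HL(s,x) ≤ (L²/(2m))(t−s) for t > s ≥ 0. -/
theorem hopflax_regularity (d : ℕ) (hd : 0 < d) (m : ℝ) (hm : 0 < m)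
    (G : Matrix (Fin d) (Fin d) ℝ) (hsym : G.IsSymm)
    (hpsd : ∀ y : Fin d → ℝ, 0 ≤ ∑ i, G.mulVec y i * y i)
    (hlow : ∀ k k', m / (d : ℝ) ^ 2 ≤ G k k')
    (ψ : (Fin d → ℝ) → ℝ) (L : ℝ) (hL : 0 ≤ L)
    (hψ : ∀ x x' : Fin d → ℝ, (∀ i, 0 ≤ x i) → (∀ i, 0 ≤ x' i) →
      |ψ x - ψ x'| ≤ L * norm1 d (x - x')) :
    (∀ t : ℝ, 0 < t → ∀ x x' : Fin d → ℝ, (∀ i, 0 ≤ x i) → (∀ i, 0 ≤ x' i) →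
        |fHL d G ψ t x - fHL d G ψ t x'| ≤ L * norm1 d (x - x')) ∧
      (∀ s t : ℝ, 0 ≤ s → s < t → ∀ x : Fin d → ℝ, (∀ i, 0 ≤ x i) →
        0 ≤ fHL d G ψ t x - fHL d G ψ s x ∧
          fHL d G ψ t x - fHL d G ψ s x ≤ (L ^ 2 / (2 * m)) * (t - s)) := by
  have hd' : (0:ℝ) < (d:ℝ) := by exact_mod_cast hd
  set Q : (Fin d → ℝ) → ℝ := fun y => ∑ i, G.mulVec y i * y i with hQdef
  set S : ℝ → (Fin d → ℝ) → Set ℝ := fun t x =>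
    {r : ℝ | ∃ y : Fin d → ℝ, (∀ i, 0 ≤ y i) ∧ r = ψ (x + y) - Q y / (2 * t)} with hSdef
  have hfHL : ∀ t x, 0 < t → fHL d G ψ t x = sSup (S t x) := by
    intro t x ht
    simp only [fHL, if_pos ht]
    rfl
  have hfHL0 : ∀ x, fHL d G ψ 0 x = ψ x := by
    intro x; simp [fHL]
  have hQ0 : Q 0 = 0 := by simp [hQdef]
  have hQsmul : ∀ (c : ℝ) y, Q (c • y) = c ^ 2 * Q y := by
    intro c y
    simp only [hQdef, Matrix.mulVec_smul, Pi.smul_apply, smul_eq_mul]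
    rw [Finset.mul_sum]
    exact Finset.sum_congr rfl fun i _ => by ring
  -- coercivity: Q y ≥ m * (norm1 y)^2 for y ≥ 0
  have hQlow : ∀ y : Fin d → ℝ, (∀ i, 0 ≤ y i) → m * (norm1 d y) ^ 2 ≤ Q y := by
    intro y hy
    have hexp : Q y = ∑ i, ∑ j, G i j * (y j * y i) := by
      simp [hQdef, Matrix.mulVec, dotProduct, Finset.sum_mul, mul_assoc]
    have hge : ∑ i, ∑ j, (m / (d : ℝ) ^ 2) * (y j * y i) ≤ Q y := by
      rw [hexp]
      refine Finset.sum_le_sum fun i _ => Finset.sum_le_sum fun j _ => ?_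
      exact mul_le_mul_of_nonneg_right (hlow i j) (mul_nonneg (hy j) (hy i))
    have hls : ∑ i, ∑ j, (m / (d : ℝ) ^ 2) * (y j * y i)
        = (m / (d : ℝ) ^ 2) * ((∑ j, y j) * (∑ i, y i)) := by
      rw [Finset.sum_mul_sum, Finset.mul_sum]
      refine Finset.sum_congr rfl fun i _ => ?_
      rw [Finset.mul_sum]
      exact Finset.sum_congr rfl fun j _ => by ring
    have hn1 : norm1 d y = (1 / (d : ℝ)) * ∑ k, y k := norm1_of_nonneg d y hy
    have : m * (norm1 d y) ^ 2 = (m / (d : ℝ) ^ 2) * ((∑ j, y j) * (∑ i, y i)) := by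
      rw [hn1]; field_simp
      try exact Or.inl trivial
    rw [this, ← hls]; exact hge
  -- upper bound for elements of S t x
  have hub : ∀ t : ℝ, 0 < t → ∀ x : Fin d → ℝ, (∀ i, 0 ≤ x i) →
      ∀ r ∈ S t x, r ≤ ψ x + L ^ 2 * t / (2 * m) := by
    rintro t ht x hx r ⟨y, hy, rfl⟩
    have hn : 0 ≤ norm1 d y := norm1_nonneg d y
    have hψle : ψ (x + y) ≤ ψ x + L * norm1 d y := by
      have h := hψ (x + y) x (fun i => by have := hx i; have := hy i; simp; linarith) hx
      have he : x + y - x = y := by abel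
      rw [he] at h
      linarith [(abs_le.mp h).2]
    have hQy := hQlow y hy
    have hdiv : m * (norm1 d y) ^ 2 / (2 * t) ≤ Q y / (2 * t) := by gcongr
    have hkey := aux_key L m (norm1 d y) t hL hm ht hn
    linarith
  have hbdd : ∀ t : ℝ, 0 < t → ∀ x : Fin d → ℝ, (∀ i, 0 ≤ x i) → BddAbove (S t x) := by
    intro t ht x hx
    exact ⟨ψ x + L ^ 2 * t / (2 * m), fun r hr => hub t ht x hx r hr⟩
  have hmem0 : ∀ t : ℝ, ∀ x : Fin d → ℝ, ψ x ∈ S t x := by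
    intro t x
    exact ⟨0, fun i => le_refl 0, by simp [hQ0]⟩
  have hne : ∀ t : ℝ, ∀ x : Fin d → ℝ, (S t x).Nonempty := fun t x => ⟨ψ x, hmem0 t x⟩
  have hlb : ∀ t : ℝ, 0 < t → ∀ x : Fin d → ℝ, (∀ i, 0 ≤ x i) → ψ x ≤ fHL d G ψ t x := by
    intro t ht x hx
    rw [hfHL t x ht]
    exact le_csSup (hbdd t ht x hx) (hmem0 t x)
  -- Lipschitz one-sided
  have hlip : ∀ t : ℝ, 0 < t → ∀ x x' : Fin d → ℝ, (∀ i, 0 ≤ x i) → (∀ i, 0 ≤ x' i) →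
      fHL d G ψ t x ≤ fHL d G ψ t x' + L * norm1 d (x - x') := by
    intro t ht x x' hx hx'
    rw [hfHL t x ht]
    apply csSup_le (hne t x)
    rintro r ⟨y, hy, rfl⟩
    have h1 : ψ (x + y) ≤ ψ (x' + y) + L * norm1 d (x - x') := by
      have h := hψ (x + y) (x' + y) (fun i => by have := hx i; have := hy i; simp; linarith)
        (fun i => by have := hx' i; have := hy i; simp; linarith)
      have he : x + y - (x' + y) = x - x' := by abel
      rw [he] at h
      linarith [(abs_le.mp h).2]
    have h2 : ψ (x' + y) - Q y / (2 * t) ≤ fHL d G ψ t x' := by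
      rw [hfHL t x' ht]
      exact le_csSup (hbdd t ht x' hx') ⟨y, hy, rfl⟩
    linarith
  constructor
  · intro t ht x x' hx hx'
    rw [abs_sub_le_iff]
    constructor
    · linarith [hlip t ht x x' hx hx']
    · have hsymm : norm1 d (x' - x) = norm1 d (x - x') := by
        unfold norm1
        congr 1
        exact Finset.sum_congr rfl fun i _ => by simp [abs_sub_comm]
      have := hlip t ht x' x hx' hx
      rw [hsymm] at this
      linarith
  · intro s t hs hst x hx
    have ht : 0 < t := lt_of_le_of_lt hs hst
    constructor
    · -- monotonicity in t
      rcases eq_or_lt_of_le hs with h0 | hs'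
      · rw [← h0, hfHL0]
        linarith [hlb t ht x hx]
      · rw [hfHL s x hs', sub_nonneg]
        apply csSup_le (hne s x)
        rintro r ⟨y, hy, rfl⟩
        have h1 : Q y / (2 * t) ≤ Q y / (2 * s) := by
          have h0 := hpsd y
          gcongr
          all_goals linarith
        have h2 : ψ (x + y) - Q y / (2 * t) ≤ fHL d G ψ t x := by
          rw [hfHL t x ht]
          exact le_csSup (hbdd t ht x hx) ⟨y, hy, rfl⟩
        linarith
    · -- upper bound on increments
      rw [sub_le_iff_le_add, hfHL t x ht]
      apply csSup_le (hne t x)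
      rintro r ⟨y, hy, rfl⟩
      set n := norm1 d y with hndef
      have hn : 0 ≤ n := norm1_nonneg d y
      set c : ℝ := s / t with hcdef
      have hc0 : 0 ≤ c := div_nonneg hs ht.le
      set z : Fin d → ℝ := c • y with hzdef
      have hz : ∀ i, 0 ≤ z i := fun i => mul_nonneg hc0 (hy i)
      have hQz : Q z = c ^ 2 * Q y := hQsmul c y
      set a : ℝ := (t - s) / t with hadef
      have ha : 0 ≤ a := div_nonneg (by linarith) ht.le
      have h1 : ψ (x + z) - Q z / (2 * s) ≤ fHL d G ψ s x := by
        rcases eq_or_lt_of_le hs with h0 | hs'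
        · have hc : c = 0 := by rw [hcdef, ← h0, zero_div]
          have hz0 : z = 0 := by rw [hzdef, hc, zero_smul]
          rw [hz0, hQ0, ← h0, hfHL0, add_zero]
          simp
        · rw [hfHL s x hs']
          exact le_csSup (hbdd s hs' x hx) ⟨z, hz, rfl⟩
      have h2 : ψ (x + y) ≤ ψ (x + z) + L * (a * n) := by
        have heq : x + y - (x + z) = (1 - c) • y := by
          funext i
          simp [hzdef]
          ring
        have h1c : (0:ℝ) ≤ 1 - c := by
          rw [hcdef, sub_nonneg]
          exact div_le_one_of_le₀ hst.le ht.le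
        have hac : 1 - c = a := by
          rw [hcdef, hadef]
          field_simp
        have h := hψ (x + y) (x + z) (fun i => by have := hx i; have := hy i; simp; linarith)
          (fun i => by have := hx i; have := hz i; simp; linarith)
        rw [heq, norm1_smul_nonneg d (1 - c) h1c y, hac] at h
        have := (abs_le.mp h).2
        linarith [this]
      have h3 : Q z / (2 * s) ≤ Q y / (2 * t) - a * (Q y / (2 * t)) := by
        rcases eq_or_lt_of_le hs with h0 | hs'
        · have hc : c = 0 := by rw [hcdef, ← h0, zero_div]
          have ha1 : a = 1 := by rw [hadef, ← h0, sub_zero, div_self ht.ne']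
          rw [hQz, hc, ha1]
          simp
        · have : Q z / (2 * s) = (1 - a) * (Q y / (2 * t)) := by
            rw [hQz, hcdef, hadef]
            field_simp
            ring
          rw [this]; ring_nf; rfl
      have hab : a * (m * n ^ 2 / (2 * t)) ≤ a * (Q y / (2 * t)) := by
        have hQy := hQlow y hy
        have : m * n ^ 2 / (2 * t) ≤ Q y / (2 * t) := by rw [hndef]; gcongr
        exact mul_le_mul_of_nonneg_left this ha
      have hkey := aux_key L m n t hL hm ht hn
      have key2 : a * (L * n) - a * (m * n ^ 2 / (2 * t)) ≤ L ^ 2 / (2 * m) * (t - s) := by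
        have h := mul_le_mul_of_nonneg_left hkey ha
        calc a * (L * n) - a * (m * n ^ 2 / (2 * t))
            = a * (L * n - m * n ^ 2 / (2 * t)) := by ring
          _ ≤ a * (L ^ 2 * t / (2 * m)) := h
          _ = L ^ 2 / (2 * m) * (t - s) := by
              rw [hadef]; field_simp
      linarith
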